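/- arXiv:2012.05450 — 3 statements merged into one kernel-verified Lean document; each statement's English description precedes it below -/
import Mathlib

section
/- Let X_1,...,X_n be independent random variables and f a function of n variables satisfying the bounded differences property with constants c_1,...,c_n. Then for any ε > 0, P(f(X_1,...,X_n) - E[f(X_1,...,X_n)] ≤ ε) ≥ 1 - exp(-2ε² / Σ_{i=1}^n c_i²). -/
open MeasureTheory ProbabilityTheory

section McdiarmidAux
open Real

universe u


private lemma mcd_D_pos {p : ℝ} (hp0 : 0 ≤ p) (hp1 : p ≤ 1) (h : ℝ) :
    0 < 1 - p + p * exp h := by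
  rcases eq_or_lt_of_le hp0 with rfl | hp
  · simp
  · nlinarith [exp_pos h, mul_pos hp (exp_pos h)]

private lemma mcd_core {p : ℝ} (hp0 : 0 ≤ p) (hp1 : p ≤ 1) (h : ℝ) :
    Real.log (1 - p + p * exp h) ≤ p * h + h ^ 2 / 8 := by
  set φ : ℝ → ℝ := fun x => p * x + x ^ 2 / 8 - Real.log (1 - p + p * exp x) with hφ
  set ψ : ℝ → ℝ := fun x => p + x / 4 - p * exp x / (1 - p + p * exp x) with hψ
  have hD : ∀ x : ℝ, 0 < 1 - p + p * exp x := mcd_D_pos hp0 hp1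
  have hφd : ∀ x : ℝ, HasDerivAt φ (ψ x) x := by
    intro x
    have h1 : HasDerivAt (fun x : ℝ => 1 - p + p * exp x) (p * exp x) x := by
      simpa using ((Real.hasDerivAt_exp x).const_mul p).const_add (1 - p)
    have h2 : HasDerivAt (fun x : ℝ => Real.log (1 - p + p * exp x))
        (p * exp x / (1 - p + p * exp x)) x := h1.log (hD x).ne'
    have h3 : HasDerivAt (fun x : ℝ => p * x + x ^ 2 / 8) (p + 2 * x / 8) x := by
      exact (((hasDerivAt_id x).const_mul p).add ((hasDerivAt_pow 2 x).div_const 8)).congr_deriv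
        (by simp)
    have := h3.sub h2
    exact this.congr_deriv (by simp only [hψ]; ring)
  have hψd : ∀ x : ℝ, HasDerivAt ψ
      (1/4 - ((p * exp x) * (1 - p)) / (1 - p + p * exp x) ^ 2) x := by
    intro x
    have h1 : HasDerivAt (fun x : ℝ => 1 - p + p * exp x) (p * exp x) x := by
      simpa using ((Real.hasDerivAt_exp x).const_mul p).const_add (1 - p)
    have h2 : HasDerivAt (fun x : ℝ => p * exp x) (p * exp x) x :=
      (Real.hasDerivAt_exp x).const_mul p
    have h4 : HasDerivAt (fun x : ℝ => p * exp x / (1 - p + p * exp x))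
        ((p * exp x * (1 - p + p * exp x) - p * exp x * (p * exp x)) / (1 - p + p * exp x) ^ 2) x :=
      h2.div h1 (hD x).ne'
    have h5 : HasDerivAt (fun x : ℝ => p + x / 4) (1/4) x := by
      simpa using ((hasDerivAt_id x).div_const 4).const_add p
    have := h5.sub h4
    exact this.congr_deriv (by ring)
  have hψnn : ∀ x : ℝ, 0 ≤ 1/4 - ((p * exp x) * (1 - p)) / (1 - p + p * exp x) ^ 2 := by
    intro x
    rw [sub_nonneg, div_le_iff₀ (pow_pos (hD x) 2)]
    nlinarith [sq_nonneg (1 - p - p * exp x), exp_pos x, hD x]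
  have hψ0 : ψ 0 = 0 := by
    have h0 : (1 : ℝ) - p + p * exp 0 = 1 := by simp
    simp only [hψ, h0, Real.exp_zero, mul_one, div_one]
    ring
  have hψmono : Monotone ψ :=
    monotone_of_deriv_nonneg (fun x => (hψd x).differentiableAt)
      (fun x => by rw [(hψd x).deriv]; exact hψnn x)
  have hφ0 : φ 0 = 0 := by simp [hφ]
  have key : ∀ x : ℝ, 0 ≤ φ x := by
    intro x
    rcases le_total 0 x with hx | hx
    · have : MonotoneOn φ (Set.Ici 0) := by
        apply monotoneOn_of_deriv_nonneg (convex_Ici 0)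
          (fun y _ => (hφd y).differentiableAt.continuousAt.continuousWithinAt)
          (fun y _ => (hφd y).differentiableAt.differentiableWithinAt)
        intro y hy
        rw [(hφd y).deriv]
        have : ψ 0 ≤ ψ y := hψmono (le_of_lt (by simpa using hy))
        linarith [hψ0 ▸ this]
      have := this (Set.self_mem_Ici) (by exact hx) hx
      linarith [hφ0 ▸ this]
    · have : AntitoneOn φ (Set.Iic 0) := by
        apply antitoneOn_of_deriv_nonpos (convex_Iic 0)
          (fun y _ => (hφd y).differentiableAt.continuousAt.continuousWithinAt)
          (fun y _ => (hφd y).differentiableAt.differentiableWithinAt)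
        intro y hy
        rw [(hφd y).deriv]
        have : ψ y ≤ ψ 0 := hψmono (le_of_lt (by simpa using hy))
        linarith [hψ0 ▸ this]
      have := this (by exact hx) (Set.self_mem_Iic) hx
      linarith [hφ0 ▸ this]
  have := key h
  simp only [hφ] at this
  linarith


private lemma mcd_chord {A B t : ℝ} (hA : A ≤ 0) (hB : 0 ≤ B) (hAB : A < B) :
    (B * exp (t * A) - A * exp (t * B)) / (B - A) ≤ exp (t ^ 2 * (B - A) ^ 2 / 8) := by
  have hc : 0 < B - A := by linarith
  set p : ℝ := -A / (B - A) with hp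
  set h : ℝ := t * (B - A) with hh
  have hp0 : 0 ≤ p := div_nonneg (neg_nonneg.mpr hA) hc.le
  have hp1 : p ≤ 1 := by rw [hp, div_le_one hc]; linarith
  have key := mcd_core hp0 hp1 h
  have hD := mcd_D_pos hp0 hp1 h
  have htB : t * B = t * A + h := by rw [hh]; ring
  have lhs_eq : (B * exp (t * A) - A * exp (t * B)) / (B - A)
      = exp (t * A) * (1 - p + p * exp h) := by
    rw [htB, Real.exp_add]
    rw [hp]
    field_simp
    ring
  rw [lhs_eq]
  have h2 : exp (t * A) * (1 - p + p * exp h) = exp (t * A + Real.log (1 - p + p * exp h)) := by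
    rw [Real.exp_add, Real.exp_log hD]
  rw [h2]
  apply Real.exp_le_exp.mpr
  have hpA : p * h = -(t * A) := by rw [hp, hh]; field_simp
  have hhsq : h ^ 2 = t ^ 2 * (B - A) ^ 2 := by rw [hh]; ring
  nlinarith [key]

private lemma mcd_hoeffding {α : Type*} [MeasurableSpace α] (ν : Measure α)
    [IsProbabilityMeasure ν] (g : α → ℝ) (hg : Measurable g) (c : ℝ)
    (hc : ∀ x y, |g x - g y| ≤ c) (t : ℝ) :
    ∫ x, exp (t * (g x - ∫ y, g y ∂ν)) ∂ν ≤ exp (t ^ 2 * c ^ 2 / 8) := by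
  have hne : Nonempty α := by
    by_contra hemp
    have : ν Set.univ = 0 := by
      rw [Set.univ_eq_empty_iff.mpr (not_nonempty_iff.mp hemp)]; simp
    simp [measure_univ] at this
  have x₀ : α := Classical.choice hne
  have hc0 : 0 ≤ c := by have := hc x₀ x₀; simpa using this
  have hbdd : BddBelow (Set.range g) := by
    refine ⟨g x₀ - c, ?_⟩
    rintro _ ⟨y, rfl⟩
    have := hc x₀ y; rw [abs_sub_comm] at this
    have := abs_le.mp this; linarith [this.1]
  set a : ℝ := ⨅ x, g x with ha
  have hga : ∀ x, a ≤ g x := fun x => ciInf_le hbdd x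
  have hgac : ∀ x, g x ≤ a + c := by
    intro x
    have : g x - c ≤ a := by
      apply le_ciInf
      intro y
      have := abs_le.mp (hc x y); linarith [this.1]
    linarith
  have hgint : Integrable g ν := by
    refine Integrable.mono' (integrable_const (|a| + c)) hg.aestronglyMeasurable ?_
    refine ae_of_all _ fun x => ?_
    rw [Real.norm_eq_abs, abs_le]
    constructor
    · have := hga x; cases abs_cases a with
      | inl h => linarith [h.1]
      | inr h => linarith [h.1]
    · have := hgac x; cases abs_cases a with
      | inl h => linarith [h.1]
      | inr h => linarith [h.1]
  set m : ℝ := ∫ y, g y ∂ν with hm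
  have ham : a ≤ m := by
    rw [hm]
    calc a = ∫ _, a ∂ν := by simp
    _ ≤ _ := integral_mono (integrable_const a) hgint hga
  have hmac : m ≤ a + c := by
    rw [hm]
    calc ∫ y, g y ∂ν ≤ ∫ _, a + c ∂ν := integral_mono hgint (integrable_const _) hgac
    _ = a + c := by simp
  rcases eq_or_lt_of_le hc0 with rfl | hcpos
  · have hgx : ∀ x, g x = a := fun x => le_antisymm (by simpa using hgac x) (hga x)
    have hma : m = a := le_antisymm (by simpa using hmac) ham
    have : ∀ x, exp (t * (g x - m)) = 1 := by intro x; rw [hgx, hma]; simp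
    simp only [this]
    simp
  · set A : ℝ := a - m with hA
    set B : ℝ := a + c - m with hB
    have hA0 : A ≤ 0 := by rw [hA]; linarith
    have hB0 : 0 ≤ B := by rw [hB]; linarith
    have hAB : A < B := by rw [hA, hB]; linarith
    have hBA : B - A = c := by rw [hA, hB]; ring
    -- pointwise convexity bound
    have hpt : ∀ x, exp (t * (g x - m)) ≤
        ((exp (t * B) - exp (t * A)) / c) * (g x - m) + (B * exp (t * A) - A * exp (t * B)) / c := by
      intro x
      set u : ℝ := g x - m with hu
      have huA : A ≤ u := by rw [hA, hu]; linarith [hga x]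
      have huB : u ≤ B := by rw [hB, hu]; linarith [hgac x]
      have hl1 : (0:ℝ) ≤ (B - u) / c := div_nonneg (by linarith) hc0
      have hl2 : (0:ℝ) ≤ (u - A) / c := div_nonneg (by linarith) hc0
      have hsum : (B - u) / c + (u - A) / c = 1 := by
        field_simp; linarith [hBA]
      have := convexOn_exp.2 (Set.mem_univ (t * A)) (Set.mem_univ (t * B)) hl1 hl2 hsum
      simp only [smul_eq_mul] at this
      have harg : (B - u) / c * (t * A) + (u - A) / c * (t * B) = t * u := by
        field_simp
        linear_combination (t * u) * hBA
      rw [harg] at this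
      calc exp (t * u) ≤ (B - u) / c * exp (t * A) + (u - A) / c * exp (t * B) := this
      _ = ((exp (t * B) - exp (t * A)) / c) * u + (B * exp (t * A) - A * exp (t * B)) / c := by
          field_simp; ring
    -- integrate
    have hexp_int : Integrable (fun x => exp (t * (g x - m))) ν := by
      refine Integrable.mono' (integrable_const (exp (|t| * c))) ?_ ?_
      · exact (Real.measurable_exp.comp ((hg.sub measurable_const).const_mul t)).aestronglyMeasurable
      · refine ae_of_all _ fun x => ?_
        rw [Real.norm_eq_abs, abs_of_pos (exp_pos _), Real.exp_le_exp]
        calc t * (g x - m) ≤ |t * (g x - m)| := le_abs_self _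
        _ = |t| * |g x - m| := abs_mul _ _
        _ ≤ |t| * c := by
            apply mul_le_mul_of_nonneg_left _ (abs_nonneg t)
            rw [abs_le]; constructor <;> [linarith [hga x]; linarith [hgac x]]
    have hrhs_int : Integrable (fun x =>
        ((exp (t * B) - exp (t * A)) / c) * (g x - m) + (B * exp (t * A) - A * exp (t * B)) / c) ν :=
      (((hgint.sub (integrable_const m)).const_mul _).add (integrable_const _))
    have h1 : ∫ x, exp (t * (g x - m)) ∂ν ≤ ∫ x,
        (((exp (t * B) - exp (t * A)) / c) * (g x - m) + (B * exp (t * A) - A * exp (t * B)) / c) ∂ν :=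
      integral_mono hexp_int hrhs_int hpt
    have h2 : ∫ x, (((exp (t * B) - exp (t * A)) / c) * (g x - m)
        + (B * exp (t * A) - A * exp (t * B)) / c) ∂ν
        = (B * exp (t * A) - A * exp (t * B)) / c := by
      have e1 : Integrable (fun x => ((exp (t * B) - exp (t * A)) / c) * (g x - m)) ν := by
        exact (hgint.sub (integrable_const m)).const_mul _
      rw [integral_add e1 (integrable_const _), MeasureTheory.integral_const_mul,
        integral_sub hgint (integrable_const _)]
      simp [hm]
    rw [h2] at h1
    calc ∫ x, exp (t * (g x - m)) ∂ν ≤ (B * exp (t * A) - A * exp (t * B)) / c := h1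
    _ = (B * exp (t * A) - A * exp (t * B)) / (B - A) := by rw [hBA]
    _ ≤ exp (t ^ 2 * (B - A) ^ 2 / 8) := mcd_chord hA0 hB0 hAB
    _ = exp (t ^ 2 * c ^ 2 / 8) := by rw [hBA]



private lemma mcd_nonempty {α : Type*} [MeasurableSpace α] (ν : Measure α)
    [IsProbabilityMeasure ν] : Nonempty α := by
  by_contra hemp
  have : ν Set.univ = 0 := by
    rw [Set.univ_eq_empty_iff.mpr (not_nonempty_iff.mp hemp)]; simp
  simp [measure_univ] at this

private lemma mcd_cnonneg {n : ℕ} {χ : Fin n → Type u} (f : (∀ i, χ i) → ℝ) (c : Fin n → ℝ)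
    (hbdd : ∀ i x y, |f x - f (Function.update x i y)| ≤ c i) (x : ∀ i, χ i) (i : Fin n) :
    0 ≤ c i := by
  have := hbdd i x (x i)
  rwa [Function.update_eq_self, sub_self, abs_zero] at this

private lemma mcd_telescope {n : ℕ} {χ : Fin n → Type u} (f : (∀ i, χ i) → ℝ) (c : Fin n → ℝ)
    (hbdd : ∀ i x y, |f x - f (Function.update x i y)| ≤ c i) (x y : ∀ i, χ i) :
    |f x - f y| ≤ ∑ i, c i := by
  classical
  set z : ℕ → ∀ i, χ i := fun k i => if (i : ℕ) < k then y i else x i with hz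
  have key : ∀ k : ℕ, |f x - f (z k)| ≤ ∑ i : Fin n, if (i : ℕ) < k then c i else 0 := by
    intro k
    induction k with
    | zero =>
      have : z 0 = x := by funext i; simp [hz]
      simp [this]
    | succ k ihk =>
      by_cases hk : k < n
      · have hstep : z (k + 1) = Function.update (z k) ⟨k, hk⟩ (y ⟨k, hk⟩) := by
          funext i
          rcases eq_or_ne i ⟨k, hk⟩ with rfl | hne
          · simp [hz]
          · have : (i : ℕ) ≠ k := fun h => hne (Fin.ext h)
            rw [Function.update_of_ne hne]
            simp only [hz]
            by_cases h1 : (i : ℕ) < k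
            · rw [if_pos h1, if_pos (by omega)]
            · rw [if_neg h1, if_neg (by omega)]
        have hsum : (∑ i : Fin n, if (i : ℕ) < k + 1 then c i else 0)
            = (∑ i : Fin n, if (i : ℕ) < k then c i else 0) + c ⟨k, hk⟩ := by
          have : ∀ i : Fin n, (if (i : ℕ) < k + 1 then c i else 0)
              = (if (i : ℕ) < k then c i else 0) + (if i = ⟨k, hk⟩ then c i else 0) := by
            intro i
            by_cases h2 : i = ⟨k, hk⟩
            · subst h2; simp
            · have h3 : (i : ℕ) ≠ k := fun h => h2 (Fin.ext h)
              by_cases h1 : (i : ℕ) < k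
              · rw [if_pos (by omega), if_pos h1, if_neg h2, add_zero]
              · rw [if_neg (by omega), if_neg h1, if_neg h2, add_zero]
          rw [Finset.sum_congr rfl fun i _ => this i, Finset.sum_add_distrib,
            Finset.sum_ite_eq' Finset.univ (⟨k, hk⟩ : Fin n)]
          simp
        rw [hsum]
        calc |f x - f (z (k+1))| ≤ |f x - f (z k)| + |f (z k) - f (z (k+1))| := by
              have := abs_sub_abs_le_abs_sub (f x - f (z k)) (f (z (k+1)) - f (z k))
              calc |f x - f (z (k+1))| = |(f x - f (z k)) + (f (z k) - f (z (k+1)))| := by ring_nf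
              _ ≤ _ := abs_add_le _ _
        _ ≤ (∑ i : Fin n, if (i : ℕ) < k then c i else 0) + c ⟨k, hk⟩ := by
              apply add_le_add ihk
              rw [hstep]
              exact hbdd ⟨k, hk⟩ (z k) (y ⟨k, hk⟩)
      · have : z (k + 1) = z k := by
          funext i
          simp only [hz]
          have : (i : ℕ) < k ↔ (i : ℕ) < k + 1 := by omega
          by_cases h1 : (i : ℕ) < k
          · rw [if_pos h1, if_pos (by omega)]
          · rw [if_neg h1, if_neg (by omega)]
        rw [this]
        convert ihk using 2 with i
        congr 1
        simp only [eq_iff_iff]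
        omega
  have hzn : z n = y := by funext i; simp [hz, i.isLt]
  calc |f x - f y| = |f x - f (z n)| := by rw [hzn]
  _ ≤ ∑ i : Fin n, if (i : ℕ) < n then c i else 0 := key n
  _ = ∑ i, c i := by apply Finset.sum_congr rfl; intro i _; rw [if_pos i.isLt]

private lemma mcd_insertNth_update {n : ℕ} {χ : Fin (n + 1) → Type u} (i : Fin (n + 1))
    (y : χ i) (z : ∀ j, χ (i.succAbove j)) (j : Fin n) (w : χ (i.succAbove j)) :
    Fin.insertNth i y (Function.update z j w)
      = Function.update (Fin.insertNth i y z) (i.succAbove j) w := by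
  funext k
  refine Fin.succAboveCases i ?_ ?_ k
  · rw [Fin.insertNth_apply_same,
      Function.update_of_ne (Fin.succAbove_ne i j).symm, Fin.insertNth_apply_same]
  · intro j'
    rcases eq_or_ne j' j with rfl | hne
    · rw [Fin.insertNth_apply_succAbove, Function.update_self, Function.update_self]
    · rw [Fin.insertNth_apply_succAbove,
        Function.update_of_ne hne,
        Function.update_of_ne (fun h => hne (Fin.succAbove_right_injective h)),
        Fin.insertNth_apply_succAbove]



/-- bounded measurable implies integrable on a finite measure -/
private lemma mcd_integrable {α : Type*} [MeasurableSpace α] (ν : Measure α)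
    [IsFiniteMeasure ν] {g : α → ℝ} (hg : Measurable g) {C : ℝ} (hC : ∀ x, |g x| ≤ C) :
    Integrable g ν :=
  Integrable.mono' (integrable_const C) hg.aestronglyMeasurable
    (ae_of_all _ fun x => by rw [Real.norm_eq_abs]; exact hC x)

set_option maxHeartbeats 1000000 in
private lemma mcd_mgf_pi (n : ℕ) : ∀ (χ : Fin n → Type u) [∀ i, MeasurableSpace (χ i)]
    (ν : ∀ i, Measure (χ i)) [∀ i, IsProbabilityMeasure (ν i)]
    (f : (∀ i, χ i) → ℝ), Measurable f → ∀ (c : Fin n → ℝ),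
    (∀ i x y, |f x - f (Function.update x i y)| ≤ c i) → ∀ t : ℝ,
    ∫ x, exp (t * (f x - ∫ z, f z ∂(Measure.pi ν))) ∂(Measure.pi ν)
      ≤ exp (t ^ 2 * (∑ i, c i ^ 2) / 8) := by
  induction n with
  | zero =>
    intro χ _ ν _ f hf c hbdd t
    have hconst : ∀ x : ∀ i, χ i, f x = f (fun i => i.elim0) := fun x => by
      congr 1; funext i; exact i.elim0
    have hint : (∫ z, f z ∂(Measure.pi ν)) = f (fun i => i.elim0) := by
      rw [show f = fun _ => f (fun i => i.elim0) from funext hconst]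
      simp
    calc ∫ x, exp (t * (f x - ∫ z, f z ∂(Measure.pi ν))) ∂(Measure.pi ν)
        = ∫ _, (1:ℝ) ∂(Measure.pi ν) := by
          congr 1; funext x; rw [hconst x, hint]; simp
    _ = 1 := by simp
    _ ≤ _ := by simp
  | succ n ih =>
    intro χ _ ν _ f hf c hbdd t
    classical
    -- setup
    set i0 : Fin (n + 1) := 0 with hi0
    set e := MeasurableEquiv.piFinSuccAbove χ i0 with he
    set ν' : ∀ j : Fin n, Measure (χ (i0.succAbove j)) := fun j => ν (i0.succAbove j) with hν'
    have hmp : MeasurePreserving e (Measure.pi ν) ((ν i0).prod (Measure.pi ν')) :=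
      measurePreserving_piFinSuccAbove ν i0
    set m : ℝ := ∫ z, f z ∂(Measure.pi ν) with hm
    set F : χ i0 × (∀ j, χ (i0.succAbove j)) → ℝ := fun p => f (Fin.insertNth i0 p.1 p.2) with hF
    have hesymm : ∀ p, e.symm p = Fin.insertNth i0 p.1 p.2 := by
      intro p
      rw [he, MeasurableEquiv.piFinSuccAbove_symm_apply]
      rfl
    have hFe : ∀ x, F (e x) = f x := by
      intro x
      show f (Fin.insertNth i0 (e x).1 (e x).2) = f x
      rw [← hesymm, MeasurableEquiv.symm_apply_apply]
    have hFmeas : Measurable F := by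
      have : F = f ∘ e.symm := by funext p; rw [Function.comp_apply, hesymm]
      rw [this]; exact hf.comp e.symm.measurable
    -- global bound on f
    have hne : ∀ i, Nonempty (χ i) := fun i => mcd_nonempty (ν i)
    have xbar : ∀ i, χ i := fun i => Classical.choice (hne i)
    set B : ℝ := |f xbar| + ∑ i, c i with hB
    have hfB : ∀ x, |f x| ≤ B := by
      intro x
      have := mcd_telescope f c hbdd x xbar
      have h2 := abs_sub_abs_le_abs_sub (f x) (f xbar)
      rw [hB]; linarith
    have hcnn : ∀ i, 0 ≤ c i := mcd_cnonneg f c hbdd xbar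
    -- g
    set g : (∀ j, χ (i0.succAbove j)) → ℝ := fun z => ∫ y, F (y, z) ∂(ν i0) with hg
    have hgsm : StronglyMeasurable g :=
      hFmeas.stronglyMeasurable.integral_prod_left'
    have hgmeas : Measurable g := hgsm.measurable
    have hgB : ∀ z, |g z| ≤ B := by
      intro z
      rw [hg]
      calc |∫ y, F (y, z) ∂(ν i0)| = ‖∫ y, F (y, z) ∂(ν i0)‖ := rfl
      _ ≤ B * ((ν i0) Set.univ).toReal :=
          norm_integral_le_of_norm_le_const (ae_of_all _ fun y => hfB _)
      _ = B := by simp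
    have hFyz_meas : ∀ z, Measurable fun y => F (y, z) := fun z =>
      hFmeas.comp measurable_prodMk_right
    have hFyz_int : ∀ z, Integrable (fun y => F (y, z)) (ν i0) := fun z =>
      mcd_integrable _ (hFyz_meas z) (fun y => hfB _)
    -- bounded differences for g
    have hgbdd : ∀ (j : Fin n) z w, |g z - g (Function.update z j w)| ≤ c (i0.succAbove j) := by
      intro j z w
      have heq : ∀ y, F (y, Function.update z j w)
          = f (Function.update (Fin.insertNth i0 y z) (i0.succAbove j) w) := by
        intro y
        rw [hF]
        simp only
        rw [mcd_insertNth_update]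
      have : g z - g (Function.update z j w)
          = ∫ y, (F (y, z) - F (y, Function.update z j w)) ∂(ν i0) := by
        rw [hg]
        simp only
        rw [integral_sub (hFyz_int z) (hFyz_int _)]
      rw [this]
      calc |∫ y, (F (y, z) - F (y, Function.update z j w)) ∂(ν i0)|
          ≤ c (i0.succAbove j) * ((ν i0) Set.univ).toReal := by
            rw [← Real.norm_eq_abs]
            apply norm_integral_le_of_norm_le_const
            refine ae_of_all _ fun y => ?_
            rw [Real.norm_eq_abs, heq y]
            exact hbdd (i0.succAbove j) (Fin.insertNth i0 y z) w
      _ = c (i0.succAbove j) := by simp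
    -- m = ∫ g
    have hFint : Integrable F ((ν i0).prod (Measure.pi ν')) :=
      mcd_integrable _ hFmeas (fun p => hfB _)
    have hmg : m = ∫ z, g z ∂(Measure.pi ν') := by
      have h1 : ∫ x, F (e x) ∂(Measure.pi ν) = ∫ p, F p ∂((ν i0).prod (Measure.pi ν')) :=
        hmp.integral_comp e.measurableEmbedding F
      have h2 : ∫ x, F (e x) ∂(Measure.pi ν) = m := by
        rw [hm]; congr 1; funext x; rw [hFe]
      rw [← h2, h1, integral_prod_symm F hFint]
    -- the exp integrand and its transfer
    set G : χ i0 × (∀ j, χ (i0.succAbove j)) → ℝ := fun p => exp (t * (F p - m)) with hG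
    have hGmeas : Measurable G := (Real.measurable_exp.comp ((hFmeas.sub measurable_const).const_mul t))
    have hGB : ∀ p, |G p| ≤ exp (|t| * (B + |m|)) := by
      intro p
      rw [hG]
      simp only
      rw [abs_of_pos (exp_pos _), Real.exp_le_exp]
      calc t * (F p - m) ≤ |t * (F p - m)| := le_abs_self _
      _ = |t| * |F p - m| := abs_mul _ _
      _ ≤ |t| * (B + |m|) := by
          apply mul_le_mul_of_nonneg_left _ (abs_nonneg t)
          calc |F p - m| ≤ |F p| + |m| := abs_sub _ _
          _ ≤ B + |m| := by linarith [hfB (Fin.insertNth i0 p.1 p.2)]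
    have hGint : Integrable G ((ν i0).prod (Measure.pi ν')) :=
      mcd_integrable _ hGmeas hGB
    have step1 : ∫ x, exp (t * (f x - m)) ∂(Measure.pi ν)
        = ∫ z, ∫ y, G (y, z) ∂(ν i0) ∂(Measure.pi ν') := by
      have h1 : ∫ x, G (e x) ∂(Measure.pi ν) = ∫ p, G p ∂((ν i0).prod (Measure.pi ν')) :=
        hmp.integral_comp e.measurableEmbedding G
      have h2 : ∀ x, G (e x) = exp (t * (f x - m)) := by
        intro x
        show exp (t * (F (e x) - m)) = exp (t * (f x - m))
        rw [hFe]
      calc ∫ x, exp (t * (f x - m)) ∂(Measure.pi ν) = ∫ x, G (e x) ∂(Measure.pi ν) := by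
            congr 1; funext x; rw [h2]
      _ = ∫ p, G p ∂((ν i0).prod (Measure.pi ν')) := h1
      _ = ∫ z, ∫ y, G (y, z) ∂(ν i0) ∂(Measure.pi ν') := integral_prod_symm G hGint
    -- pointwise in z: inner integral bound
    set K : ℝ := exp (t ^ 2 * (c i0) ^ 2 / 8) with hK
    have step2 : ∀ z, ∫ y, G (y, z) ∂(ν i0) ≤ exp (t * (g z - m)) * K := by
      intro z
      have hsplit : ∀ y, G (y, z) = exp (t * (F (y, z) - g z)) * exp (t * (g z - m)) := by
        intro y
        show exp (t * (F (y, z) - m)) = exp (t * (F (y, z) - g z)) * exp (t * (g z - m))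
        rw [← Real.exp_add]
        congr 1
        ring
      calc ∫ y, G (y, z) ∂(ν i0)
          = (∫ y, exp (t * (F (y, z) - g z)) ∂(ν i0)) * exp (t * (g z - m)) := by
            simp only [hsplit]
            rw [integral_mul_const]
      _ ≤ K * exp (t * (g z - m)) := by
            apply mul_le_mul_of_nonneg_right _ (exp_pos _).le
            have hgz : g z = ∫ y, F (y, z) ∂(ν i0) := rfl
            rw [hgz]
            refine mcd_hoeffding (ν i0) (fun y => F (y, z)) (hFyz_meas z) (c i0) ?_ t
            intro y y'
            show |F (y, z) - F (y', z)| ≤ c i0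
            have : F (y', z) = f (Function.update (Fin.insertNth i0 y z) i0 y') := by
              rw [hF]; simp only
              rw [Fin.update_insertNth]
            rw [this]
            exact hbdd i0 (Fin.insertNth i0 y z) y'
      _ = exp (t * (g z - m)) * K := mul_comm _ _
    -- integrate over z
    have hinner_meas : StronglyMeasurable fun z => ∫ y, G (y, z) ∂(ν i0) :=
      hGmeas.stronglyMeasurable.integral_prod_left'
    have hinner_int : Integrable (fun z => ∫ y, G (y, z) ∂(ν i0)) (Measure.pi ν') := by
      refine mcd_integrable _ hinner_meas.measurable (C := exp (|t| * (B + |m|))) fun z => ?_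
      calc |∫ y, G (y, z) ∂(ν i0)| ≤ exp (|t| * (B + |m|)) * ((ν i0) Set.univ).toReal := by
            rw [← Real.norm_eq_abs]
            exact norm_integral_le_of_norm_le_const (ae_of_all _ fun y => hGB _)
      _ = _ := by simp
    have houter_int : Integrable (fun z => exp (t * (g z - m)) * K) (Measure.pi ν') := by
      refine mcd_integrable _ ((Real.measurable_exp.comp
        ((hgmeas.sub measurable_const).const_mul t)).mul_const K)
        (C := exp (|t| * (B + |m|)) * K) fun z => ?_
      rw [abs_mul, abs_of_pos (exp_pos _), abs_of_pos (exp_pos _)]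
      apply mul_le_mul_of_nonneg_right _ (exp_pos _).le
      rw [Real.exp_le_exp]
      calc t * (g z - m) ≤ |t * (g z - m)| := le_abs_self _
      _ = |t| * |g z - m| := abs_mul _ _
      _ ≤ |t| * (B + |m|) := by
          apply mul_le_mul_of_nonneg_left _ (abs_nonneg t)
          calc |g z - m| ≤ |g z| + |m| := abs_sub _ _
          _ ≤ B + |m| := by linarith [hgB z]
    have step3 : ∫ z, ∫ y, G (y, z) ∂(ν i0) ∂(Measure.pi ν')
        ≤ ∫ z, exp (t * (g z - m)) * K ∂(Measure.pi ν') :=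
      integral_mono hinner_int houter_int step2
    have step4 : ∫ z, exp (t * (g z - m)) * K ∂(Measure.pi ν')
        ≤ exp (t ^ 2 * (∑ j, c (i0.succAbove j) ^ 2) / 8) * K := by
      rw [integral_mul_const]
      apply mul_le_mul_of_nonneg_right _ (by rw [hK]; positivity)
      have := ih (fun j => χ (i0.succAbove j)) ν' g hgmeas (fun j => c (i0.succAbove j)) hgbdd t
      rwa [← hmg] at this
    calc ∫ x, exp (t * (f x - m)) ∂(Measure.pi ν)
        ≤ exp (t ^ 2 * (∑ j, c (i0.succAbove j) ^ 2) / 8) * K := by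
          rw [step1]; exact le_trans step3 step4
    _ = exp (t ^ 2 * (∑ i, c i ^ 2) / 8) := by
        rw [hK, ← Real.exp_add, Fin.sum_univ_succAbove (fun i => c i ^ 2) i0]
        congr 1
        ring

end McdiarmidAux

section
open Real


/-- One-sided McDiarmid inequality: if `X_1,…,X_n` are independent and `f` satisfies the
bounded differences property with constants `c_i`, then for any `ε > 0`,
`P(f(X) - E[f(X)] ≤ ε) ≥ 1 - exp(-2ε²/∑ c_i²)`. -/
theorem mcdiarmid_one_sided
    {Ω : Type*} [MeasurableSpace Ω] (P : Measure Ω) [IsProbabilityMeasure P]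
    (n : ℕ) (χ : Fin n → Type*) [∀ i, MeasurableSpace (χ i)]
    (X : ∀ i, Ω → χ i) (hXmeas : ∀ i, Measurable (X i))
    (hindep : iIndepFun X P)
    (f : (∀ i, χ i) → ℝ) (hfmeas : Measurable f)
    (c : Fin n → ℝ)
    (hbdd : ∀ (i : Fin n) (x : ∀ i, χ i) (y : χ i),
      |f x - f (Function.update x i y)| ≤ c i)
    (hint : Integrable (fun w => f (fun i => X i w)) P)
    (ε : ℝ) (hε : 0 < ε) :
    1 - Real.exp (-2 * ε ^ 2 / ∑ i : Fin n, c i ^ 2) ≤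
      (P {w : Ω | f (fun i => X i w) - ∫ v, f (fun i => X i v) ∂P ≤ ε}).toReal := by
  classical
  set S : ℝ := ∑ i : Fin n, c i ^ 2 with hS
  have hS0 : 0 ≤ S := Finset.sum_nonneg fun i _ => sq_nonneg _
  rcases eq_or_lt_of_le hS0 with hSz | hSpos
  · rw [← hSz, div_zero, Real.exp_zero, sub_self]
    exact ENNReal.toReal_nonneg
  -- laws
  set μ : ∀ i, Measure (χ i) := fun i => P.map (X i) with hμ
  have hμP : ∀ i, IsProbabilityMeasure (μ i) := fun i =>
    Measure.isProbabilityMeasure_map (hXmeas i).aemeasurable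
  set Φ : Ω → ∀ i, χ i := fun ω i => X i ω with hΦ
  have hΦmeas : Measurable Φ := measurable_pi_lambda _ hXmeas
  have hlaw : P.map Φ = Measure.pi μ := by
    symm
    apply Measure.pi_eq
    intro s hs
    rw [Measure.map_apply hΦmeas (MeasurableSet.univ_pi hs)]
    have hpre : Φ ⁻¹' (Set.univ.pi s) = ⋂ i ∈ Finset.univ, X i ⁻¹' s i := by
      ext ω
      simp [hΦ, Set.mem_pi]
    rw [hpre, (iIndepFun_iff_measure_inter_preimage_eq_mul.mp hindep) Finset.univ
      (fun i _ => hs i)]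
    apply Finset.prod_congr rfl
    intro i _
    rw [hμ]
    rw [Measure.map_apply (hXmeas i) (hs i)]
  set m : ℝ := ∫ v, f (fun i => X i v) ∂P with hm
  have hmpi : m = ∫ z, f z ∂(Measure.pi μ) := by
    rw [hm, ← hlaw, integral_map hΦmeas.aemeasurable hfmeas.aestronglyMeasurable]
  -- boundedness of f
  have hne : ∀ i, Nonempty (χ i) := fun i => mcd_nonempty (μ i)
  have xbar : ∀ i, χ i := fun i => Classical.choice (hne i)
  set B : ℝ := |f xbar| + ∑ i, c i with hB
  have hfB : ∀ x, |f x| ≤ B := by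
    intro x
    have := mcd_telescope f c hbdd x xbar
    have h2 := abs_sub_abs_le_abs_sub (f x) (f xbar)
    rw [hB]; linarith
  -- Chernoff
  set t : ℝ := 4 * ε / S with ht
  have ht0 : 0 ≤ t := by positivity
  set Y : Ω → ℝ := fun ω => f (Φ ω) - m with hY
  have hYmeas : Measurable Y := (hfmeas.comp hΦmeas).sub measurable_const
  have hexpint : Integrable (fun ω => exp (t * Y ω)) P := by
    refine mcd_integrable _ (Real.measurable_exp.comp (hYmeas.const_mul t))
      (C := exp (|t| * (B + |m|))) fun ω => ?_
    rw [abs_of_pos (exp_pos _), Real.exp_le_exp]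
    calc t * Y ω ≤ |t * Y ω| := le_abs_self _
    _ = |t| * |Y ω| := abs_mul _ _
    _ ≤ |t| * (B + |m|) := by
        apply mul_le_mul_of_nonneg_left _ (abs_nonneg t)
        calc |Y ω| ≤ |f (Φ ω)| + |m| := abs_sub _ _
        _ ≤ B + |m| := by linarith [hfB (Φ ω)]
  have hmgf : mgf Y P t ≤ exp (t ^ 2 * S / 8) := by
    have h1 : mgf Y P t = ∫ x, exp (t * (f x - m)) ∂(Measure.pi μ) := by
      have hsm : AEStronglyMeasurable (fun x => exp (t * (f x - m))) (P.map Φ) := by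
        apply Measurable.aestronglyMeasurable
        exact Real.measurable_exp.comp ((hfmeas.sub measurable_const).const_mul t)
      rw [← hlaw, integral_map hΦmeas.aemeasurable hsm]
      rfl
    rw [h1]
    have := mcd_mgf_pi n χ μ f hfmeas c hbdd t
    rwa [← hmpi, ← hS] at this
  have chern : (P {ω | ε ≤ Y ω}).toReal ≤ exp (-2 * ε ^ 2 / S) := by
    calc (P {ω | ε ≤ Y ω}).toReal ≤ exp (-t * ε) * mgf Y P t :=
        measure_ge_le_exp_mul_mgf ε ht0 hexpint
    _ ≤ exp (-t * ε) * exp (t ^ 2 * S / 8) :=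
        mul_le_mul_of_nonneg_left hmgf (exp_pos _).le
    _ = exp (-t * ε + t ^ 2 * S / 8) := (Real.exp_add _ _).symm
    _ = exp (-2 * ε ^ 2 / S) := by
        congr 1
        rw [ht]
        field_simp
        ring
  -- complement
  set A : Set Ω := {w : Ω | f (fun i => X i w) - m ≤ ε} with hA
  have hAmeas : MeasurableSet A := by
    have : A = Y ⁻¹' (Set.Iic ε) := by
      ext ω; simp [hA, hY, hΦ]
    rw [this]
    exact hYmeas measurableSet_Iic
  have hcompl : Aᶜ ⊆ {ω | ε ≤ Y ω} := by
    intro ω hω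
    simp only [hA, Set.mem_compl_iff, Set.mem_setOf_eq, not_le] at hω
    simp only [Set.mem_setOf_eq, hY, hΦ]
    exact le_of_lt hω
  have h2 : (P Aᶜ).toReal ≤ exp (-2 * ε ^ 2 / S) := by
    refine le_trans ?_ chern
    apply ENNReal.toReal_mono (measure_ne_top _ _)
    exact measure_mono hcompl
  have h3 : (P A).toReal + (P Aᶜ).toReal = 1 := by
    rw [← ENNReal.toReal_add (measure_ne_top _ _) (measure_ne_top _ _),
      measure_add_measure_compl hAmeas, measure_univ, ENNReal.toReal_one]
  linarith

end
end

section
/- Let B be an n×m real matrix with m ≤ n such that A = B'B is invertible, let C be the least-squares solution of B·C = P and Ĉ the least-squares solution of B·Ĉ = P + ΔP, where P, ΔP ∈ ℝⁿ and P is in the column space of B with P = B·C. Then ‖C - Ĉ‖² / ‖C‖² ≤ κ₂(A) · ‖ΔP‖² / ‖P‖², where κ₂(A) = λ_max(A)/λ_min(A) is the 2-norm condition number of A. -/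
open Matrix

/-- Perturbation bound for least-squares solutions: if `A = B'B` is invertible,
`P = B·C` and `Ĉ = A⁻¹ B'(P + ΔP)` is the least-squares solution of the perturbed system,
then `‖C - Ĉ‖²/‖C‖² ≤ κ₂(A) ‖ΔP‖²/‖P‖²`, where `κ₂(A) = λ_max(A)/λ_min(A)`. -/
theorem least_squares_perturbation (n m : ℕ) (hm0 : 0 < m) (hmn : m ≤ n)
    (B : Matrix (Fin n) (Fin m) ℝ)
    (A : Matrix (Fin m) (Fin m) ℝ) (hA : A = Bᵀ * B) (hAinv : IsUnit A)
    (hHerm : A.IsHermitian)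
    (C : Fin m → ℝ) (P ΔP : Fin n → ℝ) (hP : P = B *ᵥ C)
    (Chat : Fin m → ℝ) (hChat : Chat = A⁻¹ *ᵥ (Bᵀ *ᵥ (P + ΔP)))
    (κ : ℝ) (hκ : κ = (⨆ i : Fin m, hHerm.eigenvalues i) / (⨅ i : Fin m, hHerm.eigenvalues i)) :
    (∑ i : Fin m, (C i - Chat i) ^ 2) / (∑ i : Fin m, (C i) ^ 2) ≤
      κ * (∑ j : Fin n, (ΔP j) ^ 2) / (∑ j : Fin n, (P j) ^ 2) := by
  classical
  have hne : Nonempty (Fin m) := ⟨⟨0, hm0⟩⟩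
  have hdet : IsUnit A.det := (isUnit_iff_isUnit_det A).mp hAinv
  have hAAi : A * A⁻¹ = 1 := mul_nonsing_inv A hdet
  have hAiA : A⁻¹ * A = 1 := nonsing_inv_mul A hdet
  have hinj : Function.Injective (A.mulVec) := mulVec_injective_iff_isUnit.mpr hAinv
  -- positive definiteness
  have hPSD : A.PosSemidef := by
    rw [hA, ← conjTranspose_eq_transpose_of_trivial]
    exact posSemidef_conjTranspose_mul_self B
  have hPD : A.PosDef := by
    refine .of_dotProduct_mulVec_pos hHerm fun x hx => ?_
    rcases (hPSD.dotProduct_mulVec_nonneg x).lt_or_eq with h | h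
    · exact h
    · exfalso
      apply hx
      have h0 : A *ᵥ x = 0 := (hPSD.dotProduct_mulVec_zero_iff x).mp h.symm
      have := hinj (h0.trans (mulVec_zero A).symm)
      exact this
  set lam : Fin m → ℝ := hHerm.eigenvalues with hlam
  have hev : ∀ i, 0 < lam i := fun i => hPD.eigenvalues_pos i
  set lmin : ℝ := ⨅ i, lam i with hlmin
  set lmax : ℝ := ⨆ i, lam i with hlmax
  have hminle : ∀ i, lmin ≤ lam i := fun i => ciInf_le (Set.Finite.bddBelow (Set.finite_range lam)) i
  have hlemax : ∀ i, lam i ≤ lmax := fun i => le_ciSup (Set.Finite.bddAbove (Set.finite_range lam)) i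
  have hminpos : 0 < lmin := by
    obtain ⟨i, hi⟩ := exists_eq_ciInf_of_finite (f := lam)
    rw [hlmin, ← hi]; exact hev i
  have hmaxpos : 0 < lmax := lt_of_lt_of_le hminpos ((hminle ⟨0, hm0⟩).trans (hlemax ⟨0, hm0⟩))
  -- spectral decomposition
  set U : Matrix (Fin m) (Fin m) ℝ := (hHerm.eigenvectorUnitary : Matrix (Fin m) (Fin m) ℝ) with hUdef
  have hU1 : Uᵀ * U = 1 := by
    have := Matrix.mem_unitaryGroup_iff'.mp hHerm.eigenvectorUnitary.2
    rwa [star_eq_conjTranspose, conjTranspose_eq_transpose_of_trivial] at this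
  have hU2 : U * Uᵀ = 1 := by
    have := Matrix.mem_unitaryGroup_iff.mp hHerm.eigenvectorUnitary.2
    rwa [star_eq_conjTranspose, conjTranspose_eq_transpose_of_trivial] at this
  have hspec : A = U * diagonal lam * Uᵀ := by
    have := hHerm.spectral_theorem
    rwa [Unitary.conjStarAlgAut_apply, star_eq_conjTranspose, conjTranspose_eq_transpose_of_trivial,
      RCLike.ofReal_real_eq_id, Function.id_comp] at this
  have hAinv_eq : A⁻¹ = U * diagonal (fun i => (lam i)⁻¹) * Uᵀ := by
    apply inv_eq_right_inv
    rw [hspec]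
    calc U * diagonal lam * Uᵀ * (U * diagonal (fun i => (lam i)⁻¹) * Uᵀ)
        = U * diagonal lam * (Uᵀ * U) * diagonal (fun i => (lam i)⁻¹) * Uᵀ := by
          noncomm_ring
      _ = U * (diagonal lam * diagonal (fun i => (lam i)⁻¹)) * Uᵀ := by
          rw [hU1]; noncomm_ring
      _ = 1 := by
          rw [diagonal_mul_diagonal]
          have : (fun i => lam i * (lam i)⁻¹) = fun _ => (1:ℝ) := by
            funext i; exact mul_inv_cancel₀ (hev i).ne'
          rw [this, diagonal_one, mul_one, hU2]
  have hquad : ∀ (d : Fin m → ℝ) (x : Fin m → ℝ),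
      x ⬝ᵥ ((U * diagonal d * Uᵀ) *ᵥ x) = ∑ i, d i * ((Uᵀ *ᵥ x) i)^2 := by
    intro d x
    rw [← mulVec_mulVec, ← mulVec_mulVec, dotProduct_mulVec x U, ← mulVec_transpose]
    simp only [dotProduct, mulVec_diagonal]
    exact Finset.sum_congr rfl (fun i _ => by ring)
  have hnormU : ∀ z : Fin m → ℝ, (U *ᵥ z) ⬝ᵥ (U *ᵥ z) = z ⬝ᵥ z := by
    intro z
    rw [dotProduct_mulVec, ← mulVec_transpose, mulVec_mulVec, hU1, one_mulVec]
  -- the perturbation vector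
  set v : Fin m → ℝ := Bᵀ *ᵥ ΔP with hv
  set w : Fin m → ℝ := Uᵀ *ᵥ v with hw
  set y : Fin m → ℝ := Uᵀ *ᵥ C with hy
  have hBtP : Bᵀ *ᵥ P = A *ᵥ C := by rw [hP, mulVec_mulVec, ← hA]
  have hBt : ∀ (x : Fin m → ℝ) (u : Fin n → ℝ), x ⬝ᵥ (Bᵀ *ᵥ u) = (B *ᵥ x) ⬝ᵥ u := by
    intro x u
    rw [dotProduct_mulVec, vecMul_transpose]
  have hdiff : ∀ i, C i - Chat i = -((A⁻¹ *ᵥ v) i) := by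
    intro i
    have e1 : Bᵀ *ᵥ (P + ΔP) = A *ᵥ C + v := by rw [mulVec_add, hBtP]
    have hCC : Chat = C + A⁻¹ *ᵥ v := by
      rw [hChat, e1, mulVec_add, mulVec_mulVec, hAiA, one_mulVec]
    rw [hCC]; simp
  -- squared norms as dot products
  have hsqm : ∀ x : Fin m → ℝ, (∑ i : Fin m, (x i)^2) = x ⬝ᵥ x := by
    intro x; simp [dotProduct, sq]
  have hsqn : ∀ x : Fin n → ℝ, (∑ j : Fin n, (x j)^2) = x ⬝ᵥ x := by
    intro x; simp [dotProduct, sq]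
  -- S_D : squared error
  have hSD : (∑ i : Fin m, (C i - Chat i)^2) = ∑ i, ((lam i)⁻¹ * w i)^2 := by
    have h1 : ∀ i, (C i - Chat i)^2 = ((A⁻¹ *ᵥ v) i)^2 := by
      intro i; rw [hdiff i]; ring
    have h2 : A⁻¹ *ᵥ v = U *ᵥ (fun i => (lam i)⁻¹ * w i) := by
      have hd : (diagonal (fun i => (lam i)⁻¹)) *ᵥ (Uᵀ *ᵥ v) = fun i => (lam i)⁻¹ * w i := by
        funext i
        rw [mulVec_diagonal, hw]
      rw [hAinv_eq, ← mulVec_mulVec, ← mulVec_mulVec, hd]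
    calc (∑ i : Fin m, (C i - Chat i)^2) = ∑ i, ((A⁻¹ *ᵥ v) i)^2 :=
          Finset.sum_congr rfl (fun i _ => h1 i)
      _ = (A⁻¹ *ᵥ v) ⬝ᵥ (A⁻¹ *ᵥ v) := hsqm _
      _ = (fun i => (lam i)⁻¹ * w i) ⬝ᵥ (fun i => (lam i)⁻¹ * w i) := by rw [h2, hnormU]
      _ = ∑ i, ((lam i)⁻¹ * w i)^2 := (hsqm _).symm
  -- t = v ⬝ᵥ A⁻¹ v
  set t : ℝ := v ⬝ᵥ (A⁻¹ *ᵥ v) with ht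
  have htsum : t = ∑ i, (lam i)⁻¹ * (w i)^2 := by
    rw [ht, hAinv_eq, hquad]
  have htnn : 0 ≤ t := by
    rw [htsum]
    exact Finset.sum_nonneg fun i _ =>
      mul_nonneg (inv_nonneg.mpr (hev i).le) (sq_nonneg _)
  -- t ≤ ‖ΔP‖² by Cauchy-Schwarz
  have htle : t ≤ ∑ j : Fin n, (ΔP j)^2 := by
    set z : Fin m → ℝ := A⁻¹ *ᵥ v with hz
    have h1 : t = ΔP ⬝ᵥ (B *ᵥ z) := by
      rw [ht, dotProduct_comm, hv, hBt, dotProduct_comm]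
    have h2 : (B *ᵥ z) ⬝ᵥ (B *ᵥ z) = t := by
      have hAz : A *ᵥ z = v := by
        rw [hz, mulVec_mulVec, hAAi, one_mulVec]
      calc (B *ᵥ z) ⬝ᵥ (B *ᵥ z) = z ⬝ᵥ (Bᵀ *ᵥ (B *ᵥ z)) := (hBt z _).symm
        _ = z ⬝ᵥ (A *ᵥ z) := by rw [hA, mulVec_mulVec]
        _ = z ⬝ᵥ v := by rw [hAz]
        _ = t := by rw [ht, dotProduct_comm]
    have hcs : (ΔP ⬝ᵥ (B *ᵥ z))^2 ≤ (∑ j : Fin n, (ΔP j)^2) * ((B *ᵥ z) ⬝ᵥ (B *ᵥ z)) := by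
      have := Finset.sum_mul_sq_le_sq_mul_sq Finset.univ ΔP (B *ᵥ z)
      simpa [dotProduct, hsqn] using this
    rw [h2, ← h1] at hcs
    rcases (eq_or_lt_of_le htnn).imp Eq.symm id with h | h
    · rw [h]; positivity
    · nlinarith [hcs, h]
  -- S_P
  have hSP : (∑ j : Fin n, (P j)^2) = ∑ i, lam i * (y i)^2 := by
    calc (∑ j : Fin n, (P j)^2) = P ⬝ᵥ P := hsqn _
      _ = C ⬝ᵥ (A *ᵥ C) := by
          rw [hP, hA, ← mulVec_mulVec, hBt C (B *ᵥ C)]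
      _ = ∑ i, lam i * (y i)^2 := by rw [hspec, hquad]
  have hSC : (∑ i : Fin m, (C i)^2) = ∑ i, (y i)^2 := by
    have hCy : C = U *ᵥ y := by
      rw [hy, mulVec_mulVec, hU2, one_mulVec]
    calc (∑ i : Fin m, (C i)^2) = C ⬝ᵥ C := hsqm _
      _ = y ⬝ᵥ y := by rw [hCy, hnormU]
      _ = ∑ i, (y i)^2 := (hsqm _).symm
  -- main inequalities
  have hSDle : (∑ i : Fin m, (C i - Chat i)^2) ≤ lmin⁻¹ * t := by
    rw [hSD, htsum, Finset.mul_sum]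
    refine Finset.sum_le_sum fun i _ => ?_
    have h2 : (lam i)⁻¹ ≤ lmin⁻¹ := inv_anti₀ hminpos (hminle i)
    have h3 : 0 ≤ (lam i)⁻¹ * (w i)^2 :=
      mul_nonneg (inv_nonneg.mpr (hev i).le) (sq_nonneg _)
    nlinarith [mul_le_mul_of_nonneg_right h2 h3]
  have hSPle : (∑ j : Fin n, (P j)^2) ≤ lmax * (∑ i : Fin m, (C i)^2) := by
    rw [hSP, hSC, Finset.mul_sum]
    exact Finset.sum_le_sum fun i _ =>
      mul_le_mul_of_nonneg_right (hlemax i) (sq_nonneg _)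
  -- case split on C = 0
  by_cases hC0 : C = 0
  · have hP0 : P = 0 := by rw [hP, hC0, mulVec_zero]
    rw [hC0, hP0]
    simp
  -- C ≠ 0 : positivity of denominators
  have hSCpos : 0 < ∑ i : Fin m, (C i)^2 := by
    obtain ⟨i, hi⟩ := Function.ne_iff.mp hC0
    exact Finset.sum_pos' (fun j _ => sq_nonneg _)
      ⟨i, Finset.mem_univ i, sq_abs (C i) ▸ pow_pos (abs_pos.mpr hi) 2⟩
  have hPne : P ≠ 0 := by
    intro h0
    apply hC0
    apply hinj
    rw [← hBtP, h0, mulVec_zero, mulVec_zero]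
  have hSPpos : 0 < ∑ j : Fin n, (P j)^2 := by
    obtain ⟨j, hj⟩ := Function.ne_iff.mp hPne
    exact Finset.sum_pos' (fun i _ => sq_nonneg _)
      ⟨j, Finset.mem_univ j, sq_abs (P j) ▸ pow_pos (abs_pos.mpr hj) 2⟩
  rw [div_le_div_iff₀ hSCpos hSPpos]
  have hκnn : 0 ≤ κ := by rw [hκ]; positivity
  calc (∑ i : Fin m, (C i - Chat i)^2) * (∑ j : Fin n, (P j)^2)
      ≤ (lmin⁻¹ * t) * (lmax * (∑ i : Fin m, (C i)^2)) := by
        apply mul_le_mul hSDle hSPle (Finset.sum_nonneg fun j _ => sq_nonneg _)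
        positivity
    _ = κ * t * (∑ i : Fin m, (C i)^2) := by
        rw [hκ]; field_simp
    _ ≤ κ * (∑ j : Fin n, (ΔP j)^2) * (∑ i : Fin m, (C i)^2) := by
        apply mul_le_mul_of_nonneg_right _ hSCpos.le
        exact mul_le_mul_of_nonneg_left htle hκnn
end

section
/- Let X_1,...,X_n be i.i.d. Beta(α+1,β+1) on I=[-1,1], independent of i.i.d. centered noises ε_1,...,ε_n with variance σ². Let g_N = f - π_N f be orthogonal (in L²_ω) to J̃_0,...,J̃_N, and define the vector v ∈ ℝ^{N+1} with components v_k = (1/n) Σ_{j=1}^n J̃_{k-1}(X_j)(g_N(X_j) + ε_j). Then E[‖v‖²] = (N+1)σ²/(n γ) + (1/n²) Σ_{k=1}^{N+1} E[Σ_{j=1}^n J̃_{k-1}(X_j)² g_N(X_j)²], where γ = 2^{α+β+1} B(α+1,β+1); in particular E[‖v‖²] ≤ (N+1)σ²/(nγ) + (m²(N+1)^{2μ+2}/(nγ)) ‖g_N‖_ω², provided Σ_{k=0}^N J̃_k(x)² ≤ m²(N+1)^{2μ+2} for all x ∈ I. -/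
open MeasureTheory Set ProbabilityTheory

/-- The Jacobi weight `ω(x) = (1-x)^α (1+x)^β`. -/
noncomputable def jacobiWeight (α β x : ℝ) : ℝ := (1 - x) ^ α * (1 + x) ^ β

/-- `γ = 2^{α+β+1} B(α+1,β+1)`. -/
noncomputable def betaGamma (α β : ℝ) : ℝ :=
  (2 : ℝ) ^ (α + β + 1) * (Real.Gamma (α + 1) * Real.Gamma (β + 1) / Real.Gamma (α + β + 2))

/-- The `Beta(α+1, β+1)` distribution on `[-1,1]`, with density `ω(x)/γ`. -/
noncomputable def betaMeasure (α β : ℝ) : Measure ℝ :=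
  volume.withDensity (fun x => ENNReal.ofReal
    ((Icc (-1 : ℝ) 1).indicator (fun y => jacobiWeight α β y / betaGamma α β) x))

open scoped NNReal ENNReal

lemma aux_l2mul {Ω : Type*} [MeasurableSpace Ω] {μ : Measure Ω} {f g : Ω → ℝ}
    (hf : MemLp f 2 μ) (hg : MemLp g 2 μ) : Integrable (fun w => f w * g w) μ := by
  have h := hf.smul (φ := g) hg (p := 2) (q := 2) (r := 1)
  rw [← memLp_one_iff_integrable]
  have : (g • f) = fun w => g w * f w := rfl
  rw [this] at h
  simpa [mul_comm] using h

lemma jacobiWeight_meas (α β : ℝ) : Measurable (jacobiWeight α β) := by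
  unfold jacobiWeight
  exact ((measurable_const.sub measurable_id).pow_const α).mul
    ((measurable_const.add measurable_id).pow_const β)

lemma betaGamma_pos {α β : ℝ} (hα : -(1/2 : ℝ) ≤ α) (hβ : -(1/2 : ℝ) ≤ β) :
    0 < betaGamma α β := by
  have h1 : (0:ℝ) < α + 1 := by linarith
  have h2 : (0:ℝ) < β + 1 := by linarith
  have h3 : (0:ℝ) < α + β + 2 := by linarith
  exact mul_pos (Real.rpow_pos_of_pos two_pos _)
    (div_pos (mul_pos (Real.Gamma_pos_of_pos h1) (Real.Gamma_pos_of_pos h2))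
      (Real.Gamma_pos_of_pos h3))

lemma jacobiWeight_nonneg (α β : ℝ) {x : ℝ} (hx : x ∈ Icc (-1:ℝ) 1) :
    0 ≤ jacobiWeight α β x :=
  mul_nonneg (Real.rpow_nonneg (by linarith [hx.2]) _)
    (Real.rpow_nonneg (by linarith [hx.1]) _)

lemma indic_nonneg {α β : ℝ} (hγ : 0 < betaGamma α β) (x : ℝ) :
    0 ≤ (Icc (-1:ℝ) 1).indicator (fun y => jacobiWeight α β y / betaGamma α β) x :=
  Set.indicator_nonneg (fun y hy => div_nonneg (jacobiWeight_nonneg α β hy) hγ.le) x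

lemma indic_meas (α β : ℝ) :
    Measurable ((Icc (-1:ℝ) 1).indicator (fun y => jacobiWeight α β y / betaGamma α β)) :=
  ((jacobiWeight_meas α β).div_const _).indicator measurableSet_Icc

lemma indic_mul (α β : ℝ) (φ : ℝ → ℝ) (x : ℝ) :
    (Icc (-1:ℝ) 1).indicator (fun y => jacobiWeight α β y / betaGamma α β) x * φ x
      = (Icc (-1:ℝ) 1).indicator (fun y => φ y * (jacobiWeight α β y / betaGamma α β)) x := by
  by_cases hx : x ∈ Icc (-1:ℝ) 1 <;>
    simp [Set.indicator_of_mem, Set.indicator_of_notMem, hx, mul_comm]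

lemma integral_betaMeasure {α β : ℝ} (hγ : 0 < betaGamma α β) (φ : ℝ → ℝ) :
    ∫ x, φ x ∂(_root_.betaMeasure α β)
      = ∫ x in Icc (-1:ℝ) 1, φ x * (jacobiWeight α β x / betaGamma α β) := by
  have hbm : _root_.betaMeasure α β = volume.withDensity (fun x =>
      ((((Icc (-1:ℝ) 1).indicator (fun y => jacobiWeight α β y / betaGamma α β) x).toNNReal
        : ℝ≥0) : ℝ≥0∞)) := rfl
  rw [hbm, integral_withDensity_eq_integral_smul
    (f := fun x => ((Icc (-1:ℝ) 1).indicator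
      (fun y => jacobiWeight α β y / betaGamma α β) x).toNNReal)
    (measurable_real_toNNReal.comp (indic_meas α β)) φ]
  have he : ∀ x : ℝ, (((Icc (-1:ℝ) 1).indicator
      (fun y => jacobiWeight α β y / betaGamma α β) x).toNNReal : ℝ≥0) • φ x
      = (Icc (-1:ℝ) 1).indicator (fun y => φ y * (jacobiWeight α β y / betaGamma α β)) x := by
    intro x
    rw [NNReal.smul_def, smul_eq_mul, Real.coe_toNNReal _ (indic_nonneg hγ x), indic_mul]
  rw [show (fun x => (((Icc (-1:ℝ) 1).indicator
      (fun y => jacobiWeight α β y / betaGamma α β) x).toNNReal : ℝ≥0) • φ x)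
      = fun x => (Icc (-1:ℝ) 1).indicator
        (fun y => φ y * (jacobiWeight α β y / betaGamma α β)) x from funext he]
  exact integral_indicator measurableSet_Icc

lemma integrable_betaMeasure_iff {α β : ℝ} (hγ : 0 < betaGamma α β) (φ : ℝ → ℝ) :
    Integrable φ (_root_.betaMeasure α β)
      ↔ IntegrableOn (fun x => φ x * (jacobiWeight α β x / betaGamma α β))
          (Icc (-1:ℝ) 1) volume := by
  unfold _root_.betaMeasure
  rw [integrable_withDensity_iff ((indic_meas α β).ennreal_ofReal)
    (Filter.Eventually.of_forall fun x => ENNReal.ofReal_lt_top)]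
  have he : (fun x => φ x * (ENNReal.ofReal ((Icc (-1:ℝ) 1).indicator
      (fun y => jacobiWeight α β y / betaGamma α β) x)).toReal)
      = fun x => (Icc (-1:ℝ) 1).indicator
        (fun y => φ y * (jacobiWeight α β y / betaGamma α β)) x := by
    funext x
    rw [ENNReal.toReal_ofReal (indic_nonneg hγ x), mul_comm, indic_mul]
  rw [he, ← integrable_indicator_iff measurableSet_Icc]
  

lemma aux_mono {f h : ℝ → ℝ} (hh : IntegrableOn h (Icc (-1:ℝ) 1) volume)
    (hf : AEStronglyMeasurable f (volume.restrict (Icc (-1:ℝ) 1)))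
    (hle : ∀ x ∈ Icc (-1:ℝ) 1, |f x| ≤ h x) : IntegrableOn f (Icc (-1:ℝ) 1) volume := by
  refine Integrable.mono hh hf ?_
  filter_upwards [ae_restrict_mem measurableSet_Icc] with x hx
  rw [Real.norm_eq_abs, Real.norm_eq_abs]
  exact (hle x hx).trans (le_abs_self _)

/-- Second moment identity and bound for `v_k = (1/n) ∑_j J̃_{k}(X_j)(g_N(X_j) + ε_j)`, where
the `X_j` are i.i.d. `Beta(α+1,β+1)`, the `ε_j` are i.i.d. centered noises with variance `σ²`
independent of the `X_j`, and `g_N = f - π_N f` is `L²_ω`-orthogonal to `J̃_0,…,J̃_N`: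
`E[‖v‖²] = (N+1)σ²/(nγ) + (1/n²) ∑_k E[∑_j J̃_k(X_j)² g_N(X_j)²]`, and if
`∑_{k=0}^N J̃_k(x)² ≤ m²(N+1)^{2μ+2}` on `[-1,1]` then
`E[‖v‖²] ≤ (N+1)σ²/(nγ) + (m²(N+1)^{2μ+2}/(nγ))‖g_N‖_ω²`. -/
theorem expected_norm_sq_residual_vector
    (α β : ℝ) (hα : -(1/2 : ℝ) ≤ α) (hβ : -(1/2 : ℝ) ≤ β)
    (μ : ℝ) (hμ : μ = max α β)
    (n N : ℕ) (hn : 0 < n)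
    {Ω : Type*} [MeasurableSpace Ω] (P : Measure Ω) [IsProbabilityMeasure P]
    (X : Fin n → Ω → ℝ) (hXmeas : ∀ j, Measurable (X j))
    (hlaw : ∀ j, Measure.map (X j) P = _root_.betaMeasure α β)
    (ε : Fin n → Ω → ℝ) (hεmeas : ∀ j, Measurable (ε j))
    (hεL2 : ∀ j, MemLp (ε j) 2 P)
    (σ : ℝ) (hσ : 0 ≤ σ)
    (hε0 : ∀ j, ∫ w, ε j w ∂P = 0) (hεvar : ∀ j, ∫ w, (ε j w) ^ 2 ∂P = σ ^ 2)
    (hindep : iIndepFun (fun j => fun w => (X j w, ε j w)) P)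
    (hXε : ∀ j, IndepFun (X j) (ε j) P)
    (J : ℕ → ℝ → ℝ) (hJmeas : ∀ k, Measurable (J k))
    (hJnorm : ∀ k ≤ N, ∫ x in Icc (-1 : ℝ) 1, (J k x) ^ 2 * jacobiWeight α β x = 1)
    (g : ℝ → ℝ) (hgmeas : Measurable g)
    (Mg : ℝ) (hgbdd : ∀ x ∈ Icc (-1 : ℝ) 1, |g x| ≤ Mg)
    (horth : ∀ k ≤ N, ∫ x in Icc (-1 : ℝ) 1, J k x * g x * jacobiWeight α β x = 0)
    (v : Fin (N + 1) → Ω → ℝ)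
    (hv : ∀ k w, v k w = (1 / (n : ℝ)) * ∑ j : Fin n, J (k : ℕ) (X j w) * (g (X j w) + ε j w)) :
    (∫ w, ∑ k : Fin (N + 1), (v k w) ^ 2 ∂P) =
        ((N : ℝ) + 1) * σ ^ 2 / (n * betaGamma α β) +
          (1 / (n : ℝ) ^ 2) * ∑ k : Fin (N + 1),
            ∫ w, ∑ j : Fin n, (J (k : ℕ) (X j w)) ^ 2 * (g (X j w)) ^ 2 ∂P ∧
      ∀ m : ℝ, (∀ x ∈ Icc (-1 : ℝ) 1,
          ∑ k ∈ Finset.range (N + 1), (J k x) ^ 2 ≤ m ^ 2 * ((N : ℝ) + 1) ^ (2 * μ + 2)) →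
        (∫ w, ∑ k : Fin (N + 1), (v k w) ^ 2 ∂P) ≤
          ((N : ℝ) + 1) * σ ^ 2 / (n * betaGamma α β) +
            m ^ 2 * ((N : ℝ) + 1) ^ (2 * μ + 2) / (n * betaGamma α β) *
              ∫ x in Icc (-1 : ℝ) 1, (g x) ^ 2 * jacobiWeight α β x := by
  have hγ : 0 < betaGamma α β := betaGamma_pos hα hβ
  have hn' : (n : ℝ) ≠ 0 := Nat.cast_ne_zero.mpr hn.ne'
  have hMg : 0 ≤ Mg := le_trans (abs_nonneg (g 0)) (hgbdd 0 (by constructor <;> norm_num))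
  -- transfer of integrals
  have key_int : ∀ (φ : ℝ → ℝ), Measurable φ → ∀ j : Fin n,
      ∫ w, φ (X j w) ∂P
        = ∫ x in Icc (-1:ℝ) 1, φ x * (jacobiWeight α β x / betaGamma α β) := by
    intro φ hφ j
    have h1 : ∫ w, φ (X j w) ∂P = ∫ x, φ x ∂(Measure.map (X j) P) :=
      (integral_map (hXmeas j).aemeasurable hφ.aestronglyMeasurable).symm
    rw [h1, hlaw j, integral_betaMeasure hγ φ]
  have key_intble : ∀ (φ : ℝ → ℝ), Measurable φ → ∀ j : Fin n,
      Integrable (fun w => φ (X j w)) P ↔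
        IntegrableOn (fun x => φ x * (jacobiWeight α β x / betaGamma α β))
          (Icc (-1:ℝ) 1) volume := by
    intro φ hφ j
    have h1 : Integrable (fun w => φ (X j w)) P ↔ Integrable φ (_root_.betaMeasure α β) := by
      rw [← hlaw j]
      exact (integrable_map_measure (by rw [hlaw j]; exact hφ.aestronglyMeasurable)
        (hXmeas j).aemeasurable).symm
    rw [h1, integrable_betaMeasure_iff hγ φ]
  -- basic integrability facts on [-1,1]
  have hω_int : IntegrableOn (fun x => jacobiWeight α β x / betaGamma α β)
      (Icc (-1:ℝ) 1) volume := by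
    have := (key_intble (fun _ => (1:ℝ)) measurable_const ⟨0, hn⟩).mp (integrable_const 1)
    simpa using this
  have hω'_int : IntegrableOn (jacobiWeight α β) (Icc (-1:ℝ) 1) volume := by
    have h2 := hω_int.const_mul (betaGamma α β)
    have e : (fun x => betaGamma α β * (jacobiWeight α β x / betaGamma α β))
        = fun x => jacobiWeight α β x := by funext x; field_simp
    rwa [e] at h2
  have hJ2ω_int : ∀ k, k ≤ N →
      IntegrableOn (fun x => (J k x)^2 * jacobiWeight α β x) (Icc (-1:ℝ) 1) volume := by
    intro k hk; by_contra h
    have h2 := hJnorm k hk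
    rw [MeasureTheory.integral_undef h] at h2; norm_num at h2
  have hJ2d_int : ∀ k, k ≤ N →
      IntegrableOn (fun x => (J k x)^2 * (jacobiWeight α β x / betaGamma α β))
        (Icc (-1:ℝ) 1) volume := by
    intro k hk
    have h2 := (hJ2ω_int k hk).div_const (betaGamma α β)
    simpa [mul_div_assoc, IntegrableOn] using h2
  have hJ2g2d_int : ∀ k, k ≤ N →
      IntegrableOn (fun x => (J k x)^2 * (g x)^2 * (jacobiWeight α β x / betaGamma α β))
        (Icc (-1:ℝ) 1) volume := by
    intro k hk
    refine aux_mono ((hJ2d_int k hk).const_mul (Mg^2))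
      ((((hJmeas k).pow_const 2).mul (hgmeas.pow_const 2)).mul
        ((jacobiWeight_meas α β).div_const _)).aestronglyMeasurable ?_
    intro x hx
    have h1 := hgbdd x hx
    have h2 : 0 ≤ jacobiWeight α β x / betaGamma α β :=
      div_nonneg (jacobiWeight_nonneg α β hx) hγ.le
    have h3 : (g x)^2 ≤ Mg^2 := by nlinarith [abs_nonneg (g x), sq_abs (g x)]
    have h4 := mul_le_mul_of_nonneg_right h3 (mul_nonneg (sq_nonneg (J k x)) h2)
    rw [abs_of_nonneg (by positivity)]
    nlinarith [h4]
  have hg2ω_int : IntegrableOn (fun x => (g x)^2 * jacobiWeight α β x)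
      (Icc (-1:ℝ) 1) volume := by
    refine aux_mono (hω'_int.const_mul (Mg^2))
      ((hgmeas.pow_const 2).mul (jacobiWeight_meas α β)).aestronglyMeasurable ?_
    intro x hx
    have h1 := hgbdd x hx
    have h2 : 0 ≤ jacobiWeight α β x := jacobiWeight_nonneg α β hx
    have h3 : (g x)^2 ≤ Mg^2 := by nlinarith [abs_nonneg (g x), sq_abs (g x)]
    have h4 := mul_le_mul_of_nonneg_right h3 h2
    rw [abs_of_nonneg (by positivity)]
    nlinarith [h4]
  -- L² facts
  have hJL2 : ∀ k, k ≤ N → ∀ j : Fin n, MemLp (fun w => J k (X j w)) 2 P := by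
    intro k hk j
    have hm : AEStronglyMeasurable (fun w => J k (X j w)) P :=
      ((hJmeas k).comp (hXmeas j)).aestronglyMeasurable
    rw [memLp_two_iff_integrable_sq hm]
    exact (key_intble (fun x => (J k x)^2) ((hJmeas k).pow_const 2) j).mpr (hJ2d_int k hk)
  have hJgL2 : ∀ k, k ≤ N → ∀ j : Fin n,
      MemLp (fun w => J k (X j w) * g (X j w)) 2 P := by
    intro k hk j
    have hm : AEStronglyMeasurable (fun w => J k (X j w) * g (X j w)) P :=
      (((hJmeas k).comp (hXmeas j)).mul (hgmeas.comp (hXmeas j))).aestronglyMeasurable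
    rw [memLp_two_iff_integrable_sq hm]
    have h2 : IntegrableOn (fun x => (J k x * g x)^2 * (jacobiWeight α β x / betaGamma α β))
        (Icc (-1:ℝ) 1) volume := by
      have := hJ2g2d_int k hk
      simp_rw [mul_pow]
      exact this
    exact (key_intble (fun x => (J k x * g x)^2)
      (((hJmeas k).mul hgmeas).pow_const 2) j).mpr h2
  have hJ2Xint : ∀ k, k ≤ N → ∀ j : Fin n, Integrable (fun w => (J k (X j w))^2) P :=
    fun k hk j => (key_intble (fun x => (J k x)^2) ((hJmeas k).pow_const 2) j).mpr
      (hJ2d_int k hk)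
  have hBL2 : ∀ k, k ≤ N → ∀ j : Fin n,
      MemLp (fun w => J k (X j w) * ε j w) 2 P := by
    intro k hk j
    have hm : AEStronglyMeasurable (fun w => J k (X j w) * ε j w) P :=
      (((hJmeas k).comp (hXmeas j)).mul (hεmeas j)).aestronglyMeasurable
    rw [memLp_two_iff_integrable_sq hm]
    have hind : IndepFun (fun w => (J k (X j w))^2) (fun w => (ε j w)^2) P :=
      (hXε j).comp (φ := fun x => (J k x)^2) (ψ := fun e => e^2)
        ((hJmeas k).pow_const 2) (measurable_id.pow_const 2)
    have h3 := hind.integrable_mul (hJ2Xint k hk j) (hεL2 j).integrable_sq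
    have e : ((fun w => (J k (X j w))^2) * (fun w => (ε j w)^2))
        = fun w => (J k (X j w) * ε j w)^2 := by
      funext w; simp [Pi.mul_apply, mul_pow]
    rwa [e] at h3
  have hZL2 : ∀ k, k ≤ N → ∀ j : Fin n,
      MemLp (fun w => J k (X j w) * (g (X j w) + ε j w)) 2 P := by
    intro k hk j
    have h2 := (hJgL2 k hk j).add (hBL2 k hk j)
    have e : ((fun w => J k (X j w) * g (X j w)) + (fun w => J k (X j w) * ε j w))
        = fun w => J k (X j w) * (g (X j w) + ε j w) := by
      funext w; simp [Pi.add_apply]; ring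
    rwa [e] at h2
  -- expectations
  have hEA : ∀ k, k ≤ N → ∀ j : Fin n, ∫ w, J k (X j w) * g (X j w) ∂P = 0 := by
    intro k hk j
    rw [key_int (fun x => J k x * g x) ((hJmeas k).mul hgmeas) j]
    have e : (∫ x in Icc (-1:ℝ) 1, (J k x * g x) * (jacobiWeight α β x / betaGamma α β))
        = (∫ x in Icc (-1:ℝ) 1, J k x * g x * jacobiWeight α β x) * (betaGamma α β)⁻¹ := by
      rw [← integral_mul_const]
      congr 1; funext x; ring
    rw [e, horth k hk, zero_mul]
  have hEJ2 : ∀ k, k ≤ N → ∀ j : Fin n,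
      ∫ w, (J k (X j w))^2 ∂P = (betaGamma α β)⁻¹ := by
    intro k hk j
    rw [key_int (fun x => (J k x)^2) ((hJmeas k).pow_const 2) j]
    have e : (∫ x in Icc (-1:ℝ) 1, (J k x)^2 * (jacobiWeight α β x / betaGamma α β))
        = (∫ x in Icc (-1:ℝ) 1, (J k x)^2 * jacobiWeight α β x) * (betaGamma α β)⁻¹ := by
      rw [← integral_mul_const]
      congr 1; funext x; ring
    rw [e, hJnorm k hk, one_mul]
  have hEB : ∀ (k : ℕ) (j : Fin n), ∫ w, J k (X j w) * ε j w ∂P = 0 := by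
    intro k j
    have hind : IndepFun (fun w => J k (X j w)) (ε j) P :=
      (hXε j).comp (hJmeas k) measurable_id
    have e : ∫ w, J k (X j w) * ε j w ∂P
        = (∫ w, J k (X j w) ∂P) * ∫ w, ε j w ∂P :=
      hind.integral_fun_mul_eq_mul_integral ((hJmeas k).comp (hXmeas j)).aestronglyMeasurable
        (hεmeas j).aestronglyMeasurable
    rw [e, hε0 j, mul_zero]
  have hEABε : ∀ (k : ℕ) (j : Fin n),
      ∫ w, ((J k (X j w))^2 * g (X j w)) * ε j w ∂P = 0 := by
    intro k j
    have hind : IndepFun (fun w => (J k (X j w))^2 * g (X j w)) (ε j) P :=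
      (hXε j).comp (((hJmeas k).pow_const 2).mul hgmeas) measurable_id
    have e : ∫ w, ((J k (X j w))^2 * g (X j w)) * ε j w ∂P
        = (∫ w, (J k (X j w))^2 * g (X j w) ∂P) * ∫ w, ε j w ∂P :=
      hind.integral_fun_mul_eq_mul_integral ((((hJmeas k).pow_const 2).mul hgmeas).comp
        (hXmeas j)).aestronglyMeasurable (hεmeas j).aestronglyMeasurable
    rw [e, hε0 j, mul_zero]
  have hEB2 : ∀ k, k ≤ N → ∀ j : Fin n,
      ∫ w, (J k (X j w))^2 * (ε j w)^2 ∂P = σ^2 * (betaGamma α β)⁻¹ := by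
    intro k hk j
    have hind : IndepFun (fun w => (J k (X j w))^2) (fun w => (ε j w)^2) P :=
      (hXε j).comp (φ := fun x => (J k x)^2) (ψ := fun e => e^2)
        ((hJmeas k).pow_const 2) (measurable_id.pow_const 2)
    have e : ∫ w, (J k (X j w))^2 * (ε j w)^2 ∂P
        = (∫ w, (J k (X j w))^2 ∂P) * ∫ w, (ε j w)^2 ∂P :=
      hind.integral_fun_mul_eq_mul_integral (((hJmeas k).pow_const 2).comp (hXmeas j)).aestronglyMeasurable
        ((hεmeas j).pow_const 2).aestronglyMeasurable
    rw [e, hEJ2 k hk j, hεvar j]; ring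
  have hEZ : ∀ k, k ≤ N → ∀ j : Fin n,
      ∫ w, J k (X j w) * (g (X j w) + ε j w) ∂P = 0 := by
    intro k hk j
    have e : (fun w => J k (X j w) * (g (X j w) + ε j w))
        = fun w => J k (X j w) * g (X j w) + J k (X j w) * ε j w := by
      funext w; ring
    rw [e, integral_add ((hJgL2 k hk j).integrable one_le_two)
      ((hBL2 k hk j).integrable one_le_two), hEA k hk j, hEB k j, add_zero]
  have hEZ2 : ∀ k, k ≤ N → ∀ j : Fin n,
      ∫ w, (J k (X j w) * (g (X j w) + ε j w))^2 ∂P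
        = σ^2 * (betaGamma α β)⁻¹ + ∫ w, (J k (X j w))^2 * (g (X j w))^2 ∂P := by
    intro k hk j
    have i1 : Integrable (fun w => (J k (X j w) * g (X j w))^2) P :=
      (hJgL2 k hk j).integrable_sq
    have i2 : Integrable (fun w => (((J k (X j w))^2 * g (X j w)) * ε j w) * 2) P := by
      have h2 : Integrable (fun w => (J k (X j w) * g (X j w)) * (J k (X j w) * ε j w)) P :=
        aux_l2mul (hJgL2 k hk j) (hBL2 k hk j)
      have e2 : (fun w => (J k (X j w) * g (X j w)) * (J k (X j w) * ε j w))
          = fun w => ((J k (X j w))^2 * g (X j w)) * ε j w := by funext w; ring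
      rw [e2] at h2
      exact h2.mul_const 2
    have i3 : Integrable (fun w => (J k (X j w))^2 * (ε j w)^2) P := by
      have hind : IndepFun (fun w => (J k (X j w))^2) (fun w => (ε j w)^2) P :=
        (hXε j).comp (φ := fun x => (J k x)^2) (ψ := fun e => e^2)
          ((hJmeas k).pow_const 2) (measurable_id.pow_const 2)
      have h3 := hind.integrable_mul (hJ2Xint k hk j) (hεL2 j).integrable_sq
      have e3 : ((fun w => (J k (X j w))^2) * (fun w => (ε j w)^2))
          = fun w => (J k (X j w))^2 * (ε j w)^2 := rfl
      rwa [e3] at h3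
    have e : (fun w => (J k (X j w) * (g (X j w) + ε j w))^2)
        = fun w => (J k (X j w) * g (X j w))^2
            + ((((J k (X j w))^2 * g (X j w)) * ε j w) * 2
              + (J k (X j w))^2 * (ε j w)^2) := by
      funext w; ring
    have i23 : Integrable (fun w => (((J k (X j w))^2 * g (X j w)) * ε j w) * 2
        + (J k (X j w))^2 * (ε j w)^2) P := i2.add i3
    rw [e, integral_add i1 i23, integral_add i2 i3, integral_mul_const,
      hEABε k j, zero_mul, zero_add, hEB2 k hk j]
    have e3 : (fun w => (J k (X j w) * g (X j w))^2)
        = fun w => (J k (X j w))^2 * (g (X j w))^2 := by funext w; ring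
    rw [e3]; ring
  have hcross : ∀ k, k ≤ N → ∀ j j' : Fin n, j ≠ j' →
      ∫ w, (J k (X j w) * (g (X j w) + ε j w))
        * (J k (X j' w) * (g (X j' w) + ε j' w)) ∂P = 0 := by
    intro k hk j j' hjj
    have hZm : Measurable (fun p : ℝ × ℝ => J k p.1 * (g p.1 + p.2)) :=
      ((hJmeas k).comp measurable_fst).mul
        ((hgmeas.comp measurable_fst).add measurable_snd)
    have hind : IndepFun (fun w => J k (X j w) * (g (X j w) + ε j w))
        (fun w => J k (X j' w) * (g (X j' w) + ε j' w)) P :=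
      (hindep.indepFun hjj).comp hZm hZm
    have m1 : ∀ i : Fin n, AEStronglyMeasurable
        (fun w => J k (X i w) * (g (X i w) + ε i w)) P := fun i =>
      (((hJmeas k).comp (hXmeas i)).mul
        ((hgmeas.comp (hXmeas i)).add (hεmeas i))).aestronglyMeasurable
    have e : ∫ w, (J k (X j w) * (g (X j w) + ε j w))
          * (J k (X j' w) * (g (X j' w) + ε j' w)) ∂P
        = (∫ w, J k (X j w) * (g (X j w) + ε j w) ∂P)
          * ∫ w, J k (X j' w) * (g (X j' w) + ε j' w) ∂P :=
      hind.integral_fun_mul_eq_mul_integral (m1 j) (m1 j')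
    rw [e, hEZ k hk j, zero_mul]
  have hA2int : ∀ k, k ≤ N → ∀ j : Fin n,
      Integrable (fun w => (J k (X j w))^2 * (g (X j w))^2) P := fun k hk j =>
    (key_intble (fun x => (J k x)^2 * (g x)^2)
      (((hJmeas k).pow_const 2).mul (hgmeas.pow_const 2)) j).mpr (hJ2g2d_int k hk)
  -- per-coordinate second moment
  have hvk : ∀ k : Fin (N + 1), ∫ w, (v k w)^2 ∂P
      = σ^2 * (betaGamma α β)⁻¹ * (1/(n:ℝ))
        + (1/(n:ℝ)^2) * ∑ j : Fin n, ∫ w, (J (k:ℕ) (X j w))^2 * (g (X j w))^2 ∂P := by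
    intro k
    have hk : (k:ℕ) ≤ N := Nat.lt_succ_iff.mp k.isLt
    have hprod : ∀ j j' : Fin n, Integrable (fun w =>
        (J (k:ℕ) (X j w) * (g (X j w) + ε j w))
          * (J (k:ℕ) (X j' w) * (g (X j' w) + ε j' w))) P :=
      fun j j' => aux_l2mul (hZL2 _ hk j) (hZL2 _ hk j')
    have e1 : (fun w => (v k w)^2) = fun w => (1/(n:ℝ))^2
        * (∑ j : Fin n, J (k:ℕ) (X j w) * (g (X j w) + ε j w))^2 := by
      funext w; rw [hv k w]; ring
    rw [e1, integral_const_mul]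
    have e2 : (fun w => (∑ j : Fin n, J (k:ℕ) (X j w) * (g (X j w) + ε j w))^2)
        = fun w => ∑ j : Fin n, ∑ j' : Fin n,
            (J (k:ℕ) (X j w) * (g (X j w) + ε j w))
              * (J (k:ℕ) (X j' w) * (g (X j' w) + ε j' w)) := by
      funext w; rw [sq, Finset.sum_mul_sum]
    rw [e2, integral_finset_sum _
      (fun j _ => integrable_finset_sum _ (fun j' _ => hprod j j'))]
    have e3 : ∑ j : Fin n, ∫ w, ∑ j' : Fin n,
          (J (k:ℕ) (X j w) * (g (X j w) + ε j w))
            * (J (k:ℕ) (X j' w) * (g (X j' w) + ε j' w)) ∂P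
        = ∑ j : Fin n, (σ^2 * (betaGamma α β)⁻¹
            + ∫ w, (J (k:ℕ) (X j w))^2 * (g (X j w))^2 ∂P) := by
      refine Finset.sum_congr rfl (fun j _ => ?_)
      rw [integral_finset_sum _ (fun j' _ => hprod j j')]
      rw [Finset.sum_eq_single j
        (fun j' _ hne => hcross _ hk j j' (Ne.symm hne))
        (fun h => absurd (Finset.mem_univ j) h)]
      have e4 : (fun w => (J (k:ℕ) (X j w) * (g (X j w) + ε j w))
            * (J (k:ℕ) (X j w) * (g (X j w) + ε j w)))
          = fun w => (J (k:ℕ) (X j w) * (g (X j w) + ε j w))^2 := by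
        funext w; ring
      rw [e4]
      exact hEZ2 _ hk j
    rw [e3, Finset.sum_add_distrib, Finset.sum_const, Finset.card_univ,
      Fintype.card_fin, nsmul_eq_mul]
    field_simp
  -- L² of v k
  have hvL2 : ∀ k : Fin (N + 1), MemLp (v k) 2 P := by
    intro k
    have hk : (k:ℕ) ≤ N := Nat.lt_succ_iff.mp k.isLt
    have h2 : MemLp (fun w => ∑ j : Fin n,
        J (k:ℕ) (X j w) * (g (X j w) + ε j w)) 2 P := by
      have h2' := memLp_finset_sum' Finset.univ
        (fun (j : Fin n) (_ : j ∈ Finset.univ) => hZL2 (k:ℕ) hk j)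
      have e : (∑ i : Fin n, fun w => J (k:ℕ) (X i w) * (g (X i w) + ε i w))
          = fun w => ∑ j : Fin n, J (k:ℕ) (X j w) * (g (X j w) + ε j w) := by
        funext w; simp
      rwa [e] at h2'
    have h3 := h2.const_mul (1/(n:ℝ))
    have e : (fun w => (1/(n:ℝ)) * ∑ j : Fin n,
        J (k:ℕ) (X j w) * (g (X j w) + ε j w)) = v k := by
      funext w; rw [hv k w]
    rwa [e] at h3
  have e4 : ∀ k : Fin (N + 1),
      ∫ w, ∑ j : Fin n, (J (k:ℕ) (X j w))^2 * (g (X j w))^2 ∂P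
        = ∑ j : Fin n, ∫ w, (J (k:ℕ) (X j w))^2 * (g (X j w))^2 ∂P :=
    fun k => integral_finset_sum _
      (fun j _ => hA2int _ (Nat.lt_succ_iff.mp k.isLt) j)
  have heq : (∫ w, ∑ k : Fin (N + 1), (v k w) ^ 2 ∂P) =
      ((N : ℝ) + 1) * σ ^ 2 / (n * betaGamma α β) +
        (1 / (n : ℝ) ^ 2) * ∑ k : Fin (N + 1),
          ∫ w, ∑ j : Fin n, (J (k : ℕ) (X j w)) ^ 2 * (g (X j w)) ^ 2 ∂P := by
    rw [integral_finset_sum _ (fun k _ => (hvL2 k).integrable_sq)]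
    rw [Finset.sum_congr rfl (fun k _ => hvk k), Finset.sum_add_distrib,
      Finset.sum_const, Finset.card_univ, Fintype.card_fin, nsmul_eq_mul,
      ← Finset.mul_sum]
    simp_rw [e4]
    push_cast
    field_simp
  refine ⟨heq, ?_⟩
  intro m hm
  rw [heq]
  have hkey : (1 / (n : ℝ) ^ 2) * ∑ k : Fin (N + 1),
      ∫ w, ∑ j : Fin n, (J (k : ℕ) (X j w)) ^ 2 * (g (X j w)) ^ 2 ∂P
      ≤ m ^ 2 * ((N : ℝ) + 1) ^ (2 * μ + 2) / (n * betaGamma α β) *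
          ∫ x in Icc (-1 : ℝ) 1, (g x) ^ 2 * jacobiWeight α β x := by
    have hkj : ∀ (k : ℕ), k ≤ N → ∀ j : Fin n,
        ∫ w, (J k (X j w))^2 * (g (X j w))^2 ∂P
          = ∫ x in Icc (-1:ℝ) 1,
              (J k x)^2 * (g x)^2 * (jacobiWeight α β x / betaGamma α β) :=
      fun k hk j => key_int (fun x => (J k x)^2 * (g x)^2)
        (((hJmeas k).pow_const 2).mul (hgmeas.pow_const 2)) j
    have e5 : ∑ k : Fin (N + 1), ∫ w, ∑ j : Fin n,
          (J (k:ℕ) (X j w))^2 * (g (X j w))^2 ∂P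
        = (n : ℝ) * ∑ k : Fin (N + 1), ∫ x in Icc (-1:ℝ) 1,
            (J (k:ℕ) x)^2 * (g x)^2 * (jacobiWeight α β x / betaGamma α β) := by
      rw [Finset.mul_sum]
      refine Finset.sum_congr rfl (fun k _ => ?_)
      have hk : (k:ℕ) ≤ N := Nat.lt_succ_iff.mp k.isLt
      rw [e4 k, Finset.sum_congr rfl (fun j _ => hkj _ hk j), Finset.sum_const,
        Finset.card_univ, Fintype.card_fin, nsmul_eq_mul]
    have e6 : ∑ k : Fin (N + 1), ∫ x in Icc (-1:ℝ) 1,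
          (J (k:ℕ) x)^2 * (g x)^2 * (jacobiWeight α β x / betaGamma α β)
        = ∫ x in Icc (-1:ℝ) 1, ∑ k : Fin (N + 1),
            (J (k:ℕ) x)^2 * (g x)^2 * (jacobiWeight α β x / betaGamma α β) :=
      (integral_finset_sum _
        (fun k _ => hJ2g2d_int _ (Nat.lt_succ_iff.mp k.isLt))).symm
    have hptwise : ∀ x ∈ Icc (-1:ℝ) 1,
        ∑ k : Fin (N + 1), (J (k:ℕ) x)^2 * (g x)^2
            * (jacobiWeight α β x / betaGamma α β)
          ≤ (m ^ 2 * ((N : ℝ) + 1) ^ (2 * μ + 2))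
            * ((g x)^2 * (jacobiWeight α β x / betaGamma α β)) := by
      intro x hx
      have h2 : 0 ≤ (g x)^2 * (jacobiWeight α β x / betaGamma α β) :=
        mul_nonneg (sq_nonneg _) (div_nonneg (jacobiWeight_nonneg α β hx) hγ.le)
      have e7 : ∑ k : Fin (N + 1), (J (k:ℕ) x)^2 * (g x)^2
            * (jacobiWeight α β x / betaGamma α β)
          = (∑ k ∈ Finset.range (N + 1), (J k x)^2)
            * ((g x)^2 * (jacobiWeight α β x / betaGamma α β)) := by
        rw [Finset.sum_mul, ← Fin.sum_univ_eq_sum_range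
          (fun k => (J k x)^2 * ((g x)^2 * (jacobiWeight α β x / betaGamma α β)))]
        refine Finset.sum_congr rfl (fun k _ => ?_)
        ring
      rw [e7]
      exact mul_le_mul_of_nonneg_right (hm x hx) h2
    have hbound : ∫ x in Icc (-1:ℝ) 1, ∑ k : Fin (N + 1),
          (J (k:ℕ) x)^2 * (g x)^2 * (jacobiWeight α β x / betaGamma α β)
        ≤ (m ^ 2 * ((N : ℝ) + 1) ^ (2 * μ + 2))
          * ((∫ x in Icc (-1:ℝ) 1, (g x)^2 * jacobiWeight α β x) * (betaGamma α β)⁻¹) := by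
      have hgd_int : IntegrableOn
          (fun x => (g x)^2 * (jacobiWeight α β x / betaGamma α β)) (Icc (-1:ℝ) 1) volume := by
        have h2 := hg2ω_int.div_const (betaGamma α β)
        simpa [mul_div_assoc, IntegrableOn] using h2
      have h8 : ∫ x in Icc (-1:ℝ) 1, (m ^ 2 * ((N : ℝ) + 1) ^ (2 * μ + 2))
            * ((g x)^2 * (jacobiWeight α β x / betaGamma α β))
          = (m ^ 2 * ((N : ℝ) + 1) ^ (2 * μ + 2))
            * ((∫ x in Icc (-1:ℝ) 1, (g x)^2 * jacobiWeight α β x) * (betaGamma α β)⁻¹) := by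
        rw [integral_const_mul]
        congr 1
        rw [← integral_mul_const]
        congr 1; funext x; ring
      rw [← h8]
      refine setIntegral_mono_on
        (integrable_finset_sum _
          (fun k _ => hJ2g2d_int _ (Nat.lt_succ_iff.mp k.isLt)))
        (hgd_int.const_mul _) measurableSet_Icc hptwise
    calc (1 / (n : ℝ) ^ 2) * ∑ k : Fin (N + 1),
          ∫ w, ∑ j : Fin n, (J (k : ℕ) (X j w)) ^ 2 * (g (X j w)) ^ 2 ∂P
        = (1/(n:ℝ)) * ∫ x in Icc (-1:ℝ) 1, ∑ k : Fin (N + 1),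
            (J (k:ℕ) x)^2 * (g x)^2 * (jacobiWeight α β x / betaGamma α β) := by
          rw [e5, ← e6]
          try field_simp
          try ring
      _ ≤ (1/(n:ℝ)) * ((m ^ 2 * ((N : ℝ) + 1) ^ (2 * μ + 2))
            * ((∫ x in Icc (-1:ℝ) 1, (g x)^2 * jacobiWeight α β x) * (betaGamma α β)⁻¹)) := by
          refine mul_le_mul_of_nonneg_left hbound (by positivity)
      _ = m ^ 2 * ((N : ℝ) + 1) ^ (2 * μ + 2) / (n * betaGamma α β) *
            ∫ x in Icc (-1 : ℝ) 1, (g x) ^ 2 * jacobiWeight α β x := by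
          field_simp
          try ring
  linarith [hkey]
end
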